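/- Let G be a simple graph with vertex set V and exactly m edges, and let κ, τ ∈ ℕ. Construct the training data set over the features {d_v : v ∈ V}: for each edge uw of G, one red example e_{uw} with e_{uw}[d_u] = e_{uw}[d_w] = 1 and value 0 in all other features; and |V|² blue examples with value 0 in every feature. Then G has a vertex set S with |S| ≤ κ such that at least τ edges of G have an endpoint in S if and only if there exists a decision tree over these features with at most κ cuts making at most m − τ errors on this training data set. -/

import Mathlib

/-- The two class labels. -/
def blue : Bool := true

def red : Bool := false

/-- Decision trees with features of type `α`: each leaf carries a class label,
each internal node (a *cut*) carries a feature and a real threshold. -/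
inductive DTree (α : Type) : Type
  | leaf (label : Bool) : DTree α
  | node (feat : α) (thr : ℝ) (left right : DTree α) : DTree α

namespace DTree

/-- The class that the tree assigns to the example `e`. -/
noncomputable def classify {α : Type} : DTree α → (α → ℝ) → Bool
  | leaf c, _ => c
  | node f x l r, e => if e f ≤ x then l.classify e else r.classify e

/-- The number of cuts (internal nodes) of the tree. -/
def numCuts {α : Type} : DTree α → ℕ
  | leaf _ => 0
  | node _ _ l r => 1 + l.numCuts + r.numCuts

end DTree

/-- The number of errors of `T` on the training data set `(E, lab)`. -/
noncomputable def errorCount {α ι : Type} [Fintype ι] (E : ι → α → ℝ)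
    (lab : ι → Bool) (T : DTree α) : ℕ :=
  (Finset.univ.filter (fun i => T.classify (E i) ≠ lab i)).card

section Aux

theorem card_filter_sum' {ι κ : Type} [Fintype ι] [Fintype κ] (P : ι ⊕ κ → Prop) [DecidablePred P] :
    (Finset.univ.filter P).card
      = (Finset.univ.filter fun i => P (Sum.inl i)).card
        + (Finset.univ.filter fun k => P (Sum.inr k)).card := by
  classical
  rw [← Fintype.card_subtype, ← Fintype.card_subtype, ← Fintype.card_subtype,
    Fintype.card_congr (Equiv.subtypeSum), Fintype.card_sum]

theorem card_attach_filter' {α : Type} (s : Finset α) (p : α → Prop) [DecidablePred p] :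
    (s.attach.filter fun a => p a.1).card = (s.filter p).card := by
  rw [Finset.filter_attach, Finset.card_map, Finset.card_attach]

noncomputable def chain {V : Type} : List V → DTree V
  | [] => DTree.leaf blue
  | v :: vs => DTree.node v (1/2) (chain vs) (DTree.leaf red)

theorem chain_numCuts {V : Type} (L : List V) : (chain L).numCuts = L.length := by
  induction L with
  | nil => rfl
  | cons v vs ih => simp [chain, DTree.numCuts, ih]; omega

theorem chain_classify {V : Type} (L : List V) (e : V → ℝ) :
    (chain L).classify e = blue ↔ ∀ v ∈ L, e v ≤ 1/2 := by
  induction L with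
  | nil => simp [chain, DTree.classify]
  | cons v vs ih =>
    simp only [chain, DTree.classify]
    by_cases h : e v ≤ 1/2
    · rw [if_pos h]
      rw [ih]
      constructor
      · intro h2; intro u hu
        rcases List.mem_cons.mp hu with rfl | hu
        · exact h
        · exact h2 u hu
      · intro h2 u hu; exact h2 u (List.mem_cons_of_mem _ hu)
    · rw [if_neg h]
      constructor
      · intro hc; exact absurd hc (by simp [red, blue])
      · intro h2; exact absurd (h2 v List.mem_cons_self) h

noncomputable def zeroFeats {V : Type} [DecidableEq V] : DTree V → Finset V
  | DTree.leaf _ => ∅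
  | DTree.node f x l r => if (0:ℝ) ≤ x then insert f (zeroFeats l) else insert f (zeroFeats r)

theorem zeroFeats_card_le {V : Type} [DecidableEq V] (T : DTree V) :
    (zeroFeats T).card ≤ T.numCuts := by
  induction T with
  | leaf c => simp [zeroFeats, DTree.numCuts]
  | node f x l r ihl ihr =>
    simp only [zeroFeats, DTree.numCuts]
    by_cases h : (0:ℝ) ≤ x
    · simp only [if_pos h]
      calc (insert f (zeroFeats l)).card ≤ (zeroFeats l).card + 1 := Finset.card_insert_le _ _
        _ ≤ 1 + l.numCuts + r.numCuts := by omega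
    · simp only [if_neg h]
      calc (insert f (zeroFeats r)).card ≤ (zeroFeats r).card + 1 := Finset.card_insert_le _ _
        _ ≤ 1 + l.numCuts + r.numCuts := by omega

theorem classify_zero_diverge {V : Type} [DecidableEq V] (T : DTree V) (e : V → ℝ)
    (h : T.classify e ≠ T.classify (fun _ => 0)) :
    ∃ f ∈ zeroFeats T, e f ≠ 0 := by
  induction T with
  | leaf c => simp [DTree.classify] at h
  | node f x l r ihl ihr =>
    simp only [DTree.classify, zeroFeats] at h ⊢
    by_cases hx : (0:ℝ) ≤ x
    · rw [if_pos hx] at h ⊢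
      by_cases he : e f ≤ x
      · rw [if_pos he] at h
        obtain ⟨g, hg, hg0⟩ := ihl h
        exact ⟨g, Finset.mem_insert_of_mem hg, hg0⟩
      · exact ⟨f, Finset.mem_insert_self _ _, by intro h0; exact he (h0 ▸ hx)⟩
    · rw [if_neg hx] at h
      rw [if_neg hx]
      by_cases he : e f ≤ x
      · refine ⟨f, Finset.mem_insert_self _ _, ?_⟩
        intro h0; rw [h0] at he; exact hx he
      · rw [if_neg he] at h
        obtain ⟨g, hg, hg0⟩ := ihr h
        exact ⟨g, Finset.mem_insert_of_mem hg, hg0⟩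

theorem bool_ne_red_iff (b : Bool) : b ≠ red ↔ b = blue := by
  cases b <;> simp [red, blue]

end Aux

open Classical in
/-- Let `G` be a simple graph with exactly `m` edges and `κ, τ ∈ ℕ`.
Build the training data set over the features `{d_v : v ∈ V}`: for each edge `uw` a
red example with value `1` in the features of its two endpoints and `0` elsewhere,
and `|V|²` blue examples (indexed by `V × V`) with value `0` everywhere. Then `G` has
a vertex set `S` with `|S| ≤ κ` covering at least `τ` edges if and only if there is a
decision tree over these features with at most `κ` cuts making at most `m − τ` errors
on this training data set. -/
theorem stmt10 {V : Type} [Fintype V] [DecidableEq V] (G : SimpleGraph V)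
    [DecidableRel G.Adj] (m κ τ : ℕ) (hm : G.edgeFinset.card = m) :
    (∃ S : Finset V, S.card ≤ κ ∧
        τ ≤ (G.edgeFinset.filter (fun e => ∃ v ∈ S, v ∈ e)).card) ↔
    (∃ T : DTree V, T.numCuts ≤ κ ∧
      ((errorCount
          (fun q : {e : Sym2 V // e ∈ G.edgeFinset} ⊕ (V × V) =>
            Sum.elim (fun es (v : V) => if v ∈ es.1 then (1 : ℝ) else 0)
              (fun _ (_ : V) => 0) q)
          (Sum.elim (fun _ => red) (fun _ => blue)) T : ℤ)
        ≤ (m : ℤ) - (τ : ℤ))) := by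
  classical
  set Ex : {e : Sym2 V // e ∈ G.edgeFinset} ⊕ (V × V) → V → ℝ :=
    fun q => Sum.elim (fun es (v : V) => if v ∈ es.1 then (1 : ℝ) else 0)
      (fun _ (_ : V) => 0) q with hEx
  set lab : {e : Sym2 V // e ∈ G.edgeFinset} ⊕ (V × V) → Bool :=
    Sum.elim (fun _ => red) (fun _ => blue) with hlab
  constructor
  · rintro ⟨S, hSκ, hScov⟩
    refine ⟨chain S.toList, ?_, ?_⟩
    · rw [chain_numCuts, Finset.length_toList]; exact hSκ
    · unfold errorCount
      rw [card_filter_sum']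
      -- blue examples are all correct
      have hblue : (Finset.univ.filter fun k : V × V =>
          (chain S.toList).classify (Ex (Sum.inr k)) ≠ lab (Sum.inr k)) = ∅ := by
        rw [Finset.filter_eq_empty_iff]
        intro k _
        simp only [hEx, hlab, Sum.elim_inr, ne_eq, not_not]
        exact (chain_classify _ _).mpr (by intro v _; norm_num)
      -- errors among edges = uncovered edges
      have hred : (Finset.univ.filter fun q : {e : Sym2 V // e ∈ G.edgeFinset} =>
            (chain S.toList).classify (Ex (Sum.inl q)) ≠ lab (Sum.inl q)).card
          = (G.edgeFinset.filter fun e => ¬ ∃ v ∈ S, v ∈ e).card := by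
        rw [Finset.univ_eq_attach]
        rw [← card_attach_filter' G.edgeFinset (fun e => ¬ ∃ v ∈ S, v ∈ e)]
        congr 1
        apply Finset.filter_congr
        intro q _
        simp only [hEx, hlab, Sum.elim_inl, bool_ne_red_iff, chain_classify]
        constructor
        · intro h ⟨v, hvS, hve⟩
          have := h v (Finset.mem_toList.mpr hvS)
          rw [if_pos hve] at this; norm_num at this
        · intro h v hv
          rw [if_neg (fun hve => h ⟨v, Finset.mem_toList.mp hv, hve⟩)]; norm_num
      rw [hblue, hred, Finset.card_empty]
      have hsplit := Finset.card_filter_add_card_filter_not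
        (s := G.edgeFinset) (p := fun e => ∃ v ∈ S, v ∈ e)
      rw [hm] at hsplit
      have hcle : (G.edgeFinset.filter fun e => ∃ v ∈ S, v ∈ e).card ≤ m := by omega
      push_cast
      omega
  · rintro ⟨T, hTκ, hTerr⟩
    by_cases hb : T.classify (fun _ : V => (0:ℝ)) = blue
    · refine ⟨zeroFeats T, le_trans (zeroFeats_card_le T) hTκ, ?_⟩
      set S := zeroFeats T with hS
      -- errors among edges
      have hsum := card_filter_sum'
        (fun i => T.classify (Ex i) ≠ lab i)
      have hwrong : ((Finset.univ.filter fun q : {e : Sym2 V // e ∈ G.edgeFinset} =>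
          T.classify (Ex (Sum.inl q)) ≠ lab (Sum.inl q)).card : ℤ) ≤ (m:ℤ) - τ := by
        calc ((Finset.univ.filter fun q : {e : Sym2 V // e ∈ G.edgeFinset} =>
            T.classify (Ex (Sum.inl q)) ≠ lab (Sum.inl q)).card : ℤ)
            ≤ (errorCount Ex lab T : ℤ) := by
              unfold errorCount; rw [hsum]; push_cast; omega
          _ ≤ (m:ℤ) - τ := hTerr
      -- correctly classified edges are covered by S
      have hcorrect : (Finset.univ.filter fun q : {e : Sym2 V // e ∈ G.edgeFinset} =>
            ¬ (T.classify (Ex (Sum.inl q)) ≠ lab (Sum.inl q))).card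
          ≤ (G.edgeFinset.filter fun e => ∃ v ∈ S, v ∈ e).card := by
        rw [Finset.univ_eq_attach]
        rw [← card_attach_filter' G.edgeFinset (fun e => ∃ v ∈ S, v ∈ e)]
        apply Finset.card_le_card
        intro q hq
        rw [Finset.mem_filter] at hq ⊢
        refine ⟨hq.1, ?_⟩
        have hcl : T.classify (Ex (Sum.inl q)) = red := not_not.mp hq.2
        have hdiff : T.classify (Ex (Sum.inl q)) ≠ T.classify (fun _ => 0) := by
          rw [hcl, hb]; simp [red, blue]
        obtain ⟨f, hf, hf0⟩ := classify_zero_diverge T _ hdiff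
        refine ⟨f, hf, ?_⟩
        by_contra hfe
        apply hf0
        simp only [hEx, Sum.elim_inl, if_neg hfe]
      -- combine counts
      have htot := Finset.card_filter_add_card_filter_not
        (s := (Finset.univ : Finset {e : Sym2 V // e ∈ G.edgeFinset}))
        (p := fun q => T.classify (Ex (Sum.inl q)) ≠ lab (Sum.inl q))
      have hcard : (Finset.univ : Finset {e : Sym2 V // e ∈ G.edgeFinset}).card = m := by
        rw [Finset.univ_eq_attach, Finset.card_attach, hm]
      rw [hcard] at htot
      omega
    · -- all-zero example classified red: then |V|² errors, forcing V empty
      have hr : T.classify (fun _ : V => (0:ℝ)) = red := by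
        cases h : T.classify (fun _ : V => (0:ℝ)) <;> simp [red, blue, h] at hb ⊢
      have hall : (Finset.univ.filter fun k : V × V =>
          T.classify (Ex (Sum.inr k)) ≠ lab (Sum.inr k)) = Finset.univ := by
        rw [Finset.filter_eq_self]
        intro k _
        simp only [hEx, hlab, Sum.elim_inr, hr, ne_eq, red, blue]
        simp
      have hbig : (Fintype.card V)^2 ≤ errorCount Ex lab T := by
        unfold errorCount
        rw [card_filter_sum', hall]
        have : (Finset.univ : Finset (V × V)).card = (Fintype.card V)^2 := by
          simp [Finset.card_univ, Fintype.card_prod, sq]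
        omega
      have hmle : m ≤ (Fintype.card V).choose 2 := by
        rw [← hm]; exact SimpleGraph.card_edgeFinset_le_card_choose_two
      have hch : (Fintype.card V).choose 2 = (Fintype.card V) * ((Fintype.card V) - 1) / 2 :=
        Nat.choose_two_right _
      have hn0 : Fintype.card V = 0 := by
        by_contra hn
        have h1 : 1 ≤ Fintype.card V := Nat.one_le_iff_ne_zero.mpr hn
        have : (Fintype.card V).choose 2 < (Fintype.card V)^2 := by
          rw [hch, sq]
          calc (Fintype.card V) * ((Fintype.card V) - 1) / 2
              ≤ (Fintype.card V) * ((Fintype.card V) - 1) := Nat.div_le_self _ _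
            _ < Fintype.card V * Fintype.card V := by
                have hlt : Fintype.card V - 1 < Fintype.card V := by omega
                exact (mul_lt_mul_iff_right₀ (by omega : 0 < Fintype.card V)).mpr hlt
        have : ((Fintype.card V)^2 : ℤ) ≤ (m:ℤ) - τ := le_trans (by exact_mod_cast Nat.cast_le.mpr hbig) hTerr
        have hmlt : (m:ℤ) < ((Fintype.card V)^2 : ℤ) := by
          exact_mod_cast lt_of_le_of_lt hmle ‹(Fintype.card V).choose 2 < (Fintype.card V)^2›
        omega
      have hm0 : m = 0 := by
        have := hmle
        rw [hn0] at this
        simpa using this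
      have hτ0 : τ = 0 := by
        have h0 : (0:ℤ) ≤ (m:ℤ) - τ := le_trans (by positivity) hTerr
        omega
      exact ⟨∅, by simp, by omega⟩
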